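/- Let g : [0,1] → ℂ be continuously differentiable. Then for every real μ > −1 and every real ν ≠ 0, |∫₀¹ t^{μ + iν} g(t) dt| ≤ (|g(1)| + ∫₀¹ |g'(t)| dt)/|ν|. In particular ∫₀¹ t^{μ+iν} g(t) dt → 0 as |ν| → ∞, uniformly in μ over μ ≥ σ₀ for any σ₀ > −1. -/

import Mathlib

theorem stmt12 (g g' : ℝ → ℂ)
    (hderiv : ∀ t ∈ Set.Icc (0:ℝ) 1, HasDerivWithinAt g (g' t) (Set.Icc 0 1) t)
    (hg' : ContinuousOn g' (Set.Icc 0 1)) :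
    (∀ μ ν : ℝ, -1 < μ → ν ≠ 0 →
      ‖∫ t in (0:ℝ)..1, (t : ℂ) ^ ((μ : ℂ) + (ν : ℂ) * Complex.I) * g t‖ ≤
        (‖g 1‖ + ∫ t in (0:ℝ)..1, ‖g' t‖) / |ν|) ∧
    (∀ σ₀ : ℝ, -1 < σ₀ → ∀ ε : ℝ, 0 < ε → ∃ N : ℝ, ∀ μ ν : ℝ, σ₀ ≤ μ → N ≤ |ν| →
      ‖∫ t in (0:ℝ)..1, (t : ℂ) ^ ((μ : ℂ) + (ν : ℂ) * Complex.I) * g t‖ < ε) := by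
  have hgc : ContinuousOn g (Set.Icc 0 1) := fun t ht => (hderiv t ht).continuousWithinAt
  have hC0 : (0:ℝ) ≤ ‖g 1‖ + ∫ t in (0:ℝ)..1, ‖g' t‖ := by
    have : (0:ℝ) ≤ ∫ t in (0:ℝ)..1, ‖g' t‖ :=
      intervalIntegral.integral_nonneg zero_le_one (fun t _ => norm_nonneg _)
    have := norm_nonneg (g 1); linarith
  have main : ∀ μ ν : ℝ, -1 < μ → ν ≠ 0 →
      ‖∫ t in (0:ℝ)..1, (t : ℂ) ^ ((μ : ℂ) + (ν : ℂ) * Complex.I) * g t‖ ≤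
        (‖g 1‖ + ∫ t in (0:ℝ)..1, ‖g' t‖) / |ν| := by
    intro μ ν hμ hν
    set σ : ℂ := (μ : ℂ) + (ν : ℂ) * Complex.I with hσdef
    have hre : σ.re = μ := by simp [hσdef]
    have him : (σ + 1).im = ν := by simp [hσdef]
    have hre1 : 0 < (σ + 1).re := by simp [hσdef]; linarith
    have hσ1 : σ + 1 ≠ 0 := by
      intro h; rw [h] at hre1; simp at hre1
    have hσne : σ ≠ -1 := by
      intro h; apply hσ1; rw [h]; ring
    set A : ℝ := ‖σ + 1‖ with hAdef
    have hA0 : 0 < A := by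
      rw [hAdef]; exact norm_pos_iff.mpr hσ1
    have hνA : |ν| ≤ A := by
      have := Complex.abs_im_le_norm (σ + 1)
      rwa [him] at this
    set F : ℝ → ℂ := fun t => (t : ℂ) ^ (σ + 1) / (σ + 1) with hFdef
    have hFc : ContinuousOn F (Set.Icc 0 1) :=
      ((Complex.continuous_ofReal_cpow_const hre1).div_const _).continuousOn
    have hF : ∀ x ∈ Set.Ioo (0:ℝ) 1, HasDerivAt F ((x : ℂ) ^ σ) x := fun x hx =>
      hasDerivAt_ofReal_cpow_const' (ne_of_gt hx.1) hσne
    have h1 : IntervalIntegrable (fun t : ℝ => (t : ℂ) ^ σ * g t) MeasureTheory.volume 0 1 := by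
      apply (intervalIntegral.intervalIntegrable_cpow' (by rw [hre]; exact hμ)).mul_continuousOn
      rwa [Set.uIcc_of_le zero_le_one]
    have h2 : IntervalIntegrable (fun t : ℝ => F t * g' t) MeasureTheory.volume 0 1 := by
      apply ContinuousOn.intervalIntegrable
      rw [Set.uIcc_of_le zero_le_one]
      exact hFc.mul hg'
    have hsub : ∫ t in (0:ℝ)..1, ((t : ℂ) ^ σ * g t + F t * g' t)
        = F 1 * g 1 - F 0 * g 0 := by
      apply intervalIntegral.integral_eq_sub_of_hasDeriv_right_of_le
        (f := fun t => F t * g t) zero_le_one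
      · exact hFc.mul hgc
      · intro x hx
        have hg : HasDerivWithinAt g (g' x) (Set.Ioi x) x := by
          apply (hderiv x ⟨le_of_lt hx.1, le_of_lt hx.2⟩).mono_of_mem_nhdsWithin
          exact Icc_mem_nhdsGT_of_mem ⟨le_of_lt hx.1, hx.2⟩
        exact ((hF x hx).hasDerivWithinAt.mul hg)
      · exact h1.add h2
    have hF0 : F 0 = 0 := by
      simp only [hFdef, Complex.ofReal_zero, Complex.zero_cpow hσ1, zero_div]
    have hF1 : F 1 = 1 / (σ + 1) := by
      simp only [hFdef, Complex.ofReal_one, Complex.one_cpow]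
    rw [intervalIntegral.integral_add h1 h2, hF0, hF1] at hsub
    have heq : ∫ t in (0:ℝ)..1, (t : ℂ) ^ σ * g t
        = g 1 / (σ + 1) - ∫ t in (0:ℝ)..1, F t * g' t := by
      rw [eq_sub_iff_add_eq, hsub]
      ring
    have hptwise : ∀ t ∈ Set.Icc (0:ℝ) 1,
        ‖F t * g' t‖ ≤ ‖g' t‖ / A := by
      intro t ht
      rw [norm_mul]
      have hFt : ‖F t‖ ≤ 1 / A := by
        rw [hFdef]
        simp only [norm_div]
        rcases eq_or_lt_of_le ht.1 with h | h
        · rw [← h]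
          simp [Complex.zero_cpow hσ1]
          positivity
        · rw [Complex.norm_cpow_eq_rpow_re_of_pos h]
          gcongr
          exact Real.rpow_le_one (le_of_lt h) ht.2 (le_of_lt hre1)
      calc ‖F t‖ * ‖g' t‖
          ≤ (1 / A) * ‖g' t‖ :=
            mul_le_mul_of_nonneg_right hFt (norm_nonneg _)
        _ = ‖g' t‖ / A := by ring
    have hint2 : ‖∫ t in (0:ℝ)..1, F t * g' t‖
        ≤ (∫ t in (0:ℝ)..1, ‖g' t‖) / A := by
      refine (intervalIntegral.norm_integral_le_integral_norm zero_le_one).trans ?_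
      rw [← intervalIntegral.integral_div]
      apply intervalIntegral.integral_mono_on zero_le_one h2.norm
      · apply ContinuousOn.intervalIntegrable
        rw [Set.uIcc_of_le zero_le_one]
        exact (continuous_norm.comp_continuousOn hg').div_const A
      · intro t ht
        exact hptwise t ht
    calc ‖∫ t in (0:ℝ)..1, (t : ℂ) ^ σ * g t‖
        = ‖g 1 / (σ + 1) - ∫ t in (0:ℝ)..1, F t * g' t‖ := by rw [heq]
      _ ≤ ‖g 1 / (σ + 1)‖ + ‖∫ t in (0:ℝ)..1, F t * g' t‖ := by
          exact norm_sub_le _ _ |>.trans (by rw [norm_div])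
      _ ≤ ‖g 1‖ / A + (∫ t in (0:ℝ)..1, ‖g' t‖) / A := by
          rw [norm_div]; exact add_le_add le_rfl hint2
      _ = (‖g 1‖ + ∫ t in (0:ℝ)..1, ‖g' t‖) / A := by ring
      _ ≤ (‖g 1‖ + ∫ t in (0:ℝ)..1, ‖g' t‖) / |ν| := by
          apply div_le_div_of_nonneg_left hC0 (abs_pos.mpr hν) hνA
  refine ⟨main, ?_⟩
  intro σ₀ hσ₀ ε hε
  set C : ℝ := ‖g 1‖ + ∫ t in (0:ℝ)..1, ‖g' t‖ with hCdef
  refine ⟨C / ε + 1, ?_⟩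
  intro μ ν hμ hν
  have hN1 : (0:ℝ) < C / ε + 1 := by positivity
  have hν0 : ν ≠ 0 := by
    intro h; rw [h, abs_zero] at hν; linarith
  have hb := main μ ν (lt_of_lt_of_le hσ₀ hμ) hν0
  calc ‖∫ t in (0:ℝ)..1, (t : ℂ) ^ ((μ : ℂ) + (ν : ℂ) * Complex.I) * g t‖
      ≤ C / |ν| := hb
    _ ≤ C / (C / ε + 1) := by
        apply div_le_div_of_nonneg_left hC0 hN1 hν
    _ < ε := by
        rw [div_lt_iff₀ hN1]
        have : 0 < ε * (C/ε) + ε := by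
          rw [mul_div_cancel₀ _ (ne_of_gt hε)]; linarith
        nlinarith [mul_div_cancel₀ C (ne_of_gt hε)]
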